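/- For p ≥ 1 and x, z : {1,…,p} → ZMod 2 with x_{p+1} := 0, define on (ℂ²)^{⊗(p+1)} the error operator E := id_0 ⊗ ⨂_{j=1}^{p} (Z^{z_j}·X^{x_j + x_{j+1}}). Then (∏_{j=1}^{p} v_j^{x_j}) · (∏_{j=1}^{p} Z_j^{z_j}) · E = X_0^{x_1} (the Pauli-X on the ancillary site 0 with exponent x_1, identity on sites 1,…,p). (This is the generic prescription (x̂_1⋯x̂_p)(ẑ_1⋯ẑ_p) by which Bob corrects the state Z^{z_j}X^{x_j+x_{j+1}}-errors he receives in the multi-qubit Ising teleportation protocol, recovering Alice's state exactly up to a possible X on an ancilla.) -/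

import Mathlib

noncomputable section
open Matrix
open scoped Classical

/-- The Pauli-X matrix. -/
def PX : Matrix (Fin 2) (Fin 2) ℂ := !![0, 1; 1, 0]

/-- The Pauli-Z matrix. -/
def PZ : Matrix (Fin 2) (Fin 2) ℂ := !![1, 0; 0, -1]

/-- The operator on `(ℂ²)^{⊗(p+1)}` (sites `0,…,p`) acting as the 2×2 matrix `A`
on site `k` and as the identity elsewhere. -/
def site (p : ℕ) (A : Matrix (Fin 2) (Fin 2) ℂ) (k : Fin (p + 1)) :
    Matrix (Fin (p + 1) → Fin 2) (Fin (p + 1) → Fin 2) ℂ :=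
  fun s t => (if ∀ j, j ≠ k → s j = t j then 1 else 0) * A (s k) (t k)

/-- The tensor (Kronecker) product `⨂_{k=0}^{p} M k` of single-site operators,
as an operator on `(ℂ²)^{⊗(p+1)}`. -/
def kron (p : ℕ) (M : Fin (p + 1) → Matrix (Fin 2) (Fin 2) ℂ) :
    Matrix (Fin (p + 1) → Fin 2) (Fin (p + 1) → Fin 2) ℂ :=
  fun s t => ∏ k, M k (s k) (t k)

/-- The vertex operator `v_j := X_{j-1} · X_j` for `1 ≤ j ≤ p`; here `j : Fin p`
represents the vertex `j+1 ∈ {1,…,p}`, acting on sites `j` and `j+1`. -/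
def vop (p : ℕ) (j : Fin p) :
    Matrix (Fin (p + 1) → Fin 2) (Fin (p + 1) → Fin 2) ℂ :=
  site p PX j.castSucc * site p PX j.succ

lemma PX_sq : PX * PX = 1 := by
  simp only [PX, Matrix.mul_fin_two]
  norm_num
  rw [← Matrix.one_fin_two]

lemma PZ_sq : PZ * PZ = 1 := by
  simp only [PZ, Matrix.mul_fin_two]
  norm_num
  rw [← Matrix.one_fin_two]

lemma pow_sq_one {M : Type*} [Monoid M] {a : M} (h : a * a = 1) (n : ℕ) :
    a ^ n = a ^ (n % 2) := by
  conv_lhs => rw [← Nat.div_add_mod n 2, pow_add, pow_mul, pow_two, h, one_pow, one_mul]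

lemma PX_pow_eq {m n : ℕ} (h : m % 2 = n % 2) : PX ^ m = PX ^ n := by
  rw [pow_sq_one PX_sq m, pow_sq_one PX_sq n, h]

lemma PZ_pow_even (n : ℕ) : PZ ^ (2 * n) = 1 := by
  rw [pow_mul, pow_two, PZ_sq, one_pow]

/-- kron of all ones is the identity. -/
lemma kron_one (p : ℕ) : kron p (fun _ => (1 : Matrix (Fin 2) (Fin 2) ℂ)) = 1 := by
  funext s t
  simp only [kron, Matrix.one_apply]
  by_cases h : s = t
  · subst h; simp
  · rw [if_neg h]
    obtain ⟨k, hk⟩ := Function.ne_iff.mp h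
    exact Finset.prod_eq_zero (Finset.mem_univ k) (by simp [Matrix.one_apply, hk])

lemma kron_mul (p : ℕ) (M N : Fin (p + 1) → Matrix (Fin 2) (Fin 2) ℂ) :
    kron p M * kron p N = kron p (fun k => M k * N k) := by
  funext s t
  simp only [kron, Matrix.mul_apply]
  rw [Finset.prod_univ_sum]
  simp [Finset.prod_mul_distrib]

lemma site_eq_kron (p : ℕ) (A : Matrix (Fin 2) (Fin 2) ℂ) (k : Fin (p + 1)) :
    site p A k = kron p (fun j => if j = k then A else 1) := by
  funext s t
  simp only [site, kron]
  rw [← Finset.mul_prod_erase Finset.univ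
    (fun x => (if x = k then A else 1) (s x) (t x)) (Finset.mem_univ k)]
  simp only [if_pos rfl]
  have h : ∀ x ∈ Finset.univ.erase k,
      (if x = k then A else (1 : Matrix (Fin 2) (Fin 2) ℂ)) (s x) (t x)
        = if s x = t x then 1 else 0 := by
    intro x hx
    rw [if_neg (Finset.ne_of_mem_erase hx)]
    simp [Matrix.one_apply]
  rw [Finset.prod_congr rfl h, Finset.prod_boole, mul_comm]
  congr 1
  simp [Finset.mem_erase]

/-- `kron` as a monoid hom from the pointwise-product monoid. -/
def kronHom (p : ℕ) :
    ((Fin (p + 1)) → Matrix (Fin 2) (Fin 2) ℂ) →*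
      Matrix (Fin (p + 1) → Fin 2) (Fin (p + 1) → Fin 2) ℂ where
  toFun := kron p
  map_one' := kron_one p
  map_mul' M N := (kron_mul p M N).symm

lemma kron_pow (p : ℕ) (M : Fin (p + 1) → Matrix (Fin 2) (Fin 2) ℂ) (n : ℕ) :
    kron p M ^ n = kron p (fun k => M k ^ n) := by
  have := map_pow (kronHom p) M n
  exact this.symm

lemma list_prod_apply {ι : Type*} {β : ι → Type*} [∀ i, Monoid (β i)]
    (l : List (∀ i, β i)) (k : ι) : l.prod k = (l.map (fun f => f k)).prod := by
  induction l with
  | nil => rfl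
  | cons h t ih => simp [ih]

lemma kron_list_prod (p n : ℕ) (M : Fin n → Fin (p + 1) → Matrix (Fin 2) (Fin 2) ℂ) :
    (List.ofFn fun j => kron p (M j)).prod
      = kron p (fun k => (List.ofFn fun j => M j k).prod) := by
  have h1 : (List.ofFn fun j => kron p (M j)) = (List.ofFn M).map (kronHom p) := by
    rw [List.map_ofFn]; rfl
  rw [h1, ← map_list_prod]
  show kron p ((List.ofFn M).prod) = _
  refine congrArg (kron p) (funext fun k => ?_)
  rw [list_prod_apply, List.map_ofFn]
  rfl

lemma prod_map_pow {M : Type*} [Monoid M] (a : M) (l : List ℕ) :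
    (l.map (a ^ ·)).prod = a ^ l.sum := by
  induction l with
  | nil => simp
  | cons h t ih => simp [ih, pow_add]

lemma prod_ofFn_pow {M : Type*} [Monoid M] (a : M) {n : ℕ} (c : Fin n → ℕ) :
    (List.ofFn fun j => a ^ c j).prod = a ^ ∑ j, c j := by
  rw [show (List.ofFn fun j => a ^ c j) = (List.ofFn c).map (a ^ ·) from
    (List.map_ofFn : List.map (a ^ ·) (List.ofFn c) = _).symm, prod_map_pow, List.sum_ofFn]

lemma sum_ite_val {p : ℕ} (m : ℕ) (c : Fin p → ℕ) :
    ∑ j : Fin p, (if m = (j : ℕ) then c j else 0)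
      = if h : m < p then c ⟨m, h⟩ else 0 := by
  split
  · next h =>
    rw [Finset.sum_eq_single ⟨m, h⟩]
    · simp
    · intro b _ hb
      exact if_neg fun hc => hb (Fin.ext hc.symm)
    · simp
  · next h => exact Finset.sum_eq_zero fun j _ => if_neg fun hc => h (by have := j.isLt; omega)

lemma sum_ite_val' {p : ℕ} (m : ℕ) (c : Fin p → ℕ) :
    ∑ j : Fin p, (if m = (j : ℕ) + 1 then c j else 0)
      = if h : m - 1 < p ∧ 1 ≤ m then c ⟨m - 1, h.1⟩ else 0 := by
  split
  · next h =>
    rw [Finset.sum_eq_single ⟨m - 1, h.1⟩]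
    · rw [if_pos (by simp; omega)]
    · intro b _ hb
      refine if_neg fun hc => hb (Fin.ext ?_)
      simp; omega
    · simp
  · next h =>
    exact Finset.sum_eq_zero fun j _ =>
      if_neg fun hc => h ⟨by have := j.isLt; omega, by omega⟩

/-- Bob's generic correction prescription in the multi-qubit Ising teleportation
protocol: with the error operator
`E := id_0 ⊗ ⨂_{j=1}^{p} (Z^{z_j}·X^{x_j + x_{j+1}})` (and `x_{p+1} := 0`),
`(∏_{j=1}^{p} v_j^{x_j}) · (∏_{j=1}^{p} Z_j^{z_j}) · E = X_0^{x_1}`. -/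
theorem generic_correction (p : ℕ) (hp : 1 ≤ p) (x z : ℕ → ZMod 2)
    (hx : x (p + 1) = 0) :
    (List.ofFn fun j : Fin p => vop p j ^ (x ((j : ℕ) + 1)).val).prod *
      (List.ofFn fun j : Fin p => site p PZ j.succ ^ (z ((j : ℕ) + 1)).val).prod *
      kron p (fun k =>
        if (k : ℕ) = 0 then 1
        else PZ ^ (z (k : ℕ)).val * PX ^ (x (k : ℕ) + x ((k : ℕ) + 1)).val) =
      site p PX 0 ^ (x 1).val := by
  simp only [vop, site_eq_kron, kron_mul, kron_pow, kron_list_prod]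
  refine congrArg (kron p) (funext fun k => ?_)
  have hcs : ∀ j : Fin p, j.castSucc ≠ j.succ := fun j => (Fin.castSucc_lt_succ : j.castSucc < j.succ).ne
  have hV : (fun j : Fin p =>
        ((if k = j.castSucc then PX else 1) * if k = j.succ then PX else 1)
          ^ (x ((j : ℕ) + 1)).val)
      = fun j : Fin p => PX ^ ((if k = j.castSucc then (x ((j : ℕ) + 1)).val else 0)
          + (if k = j.succ then (x ((j : ℕ) + 1)).val else 0)) := by
    funext j
    by_cases h1 : k = j.castSucc <;> by_cases h2 : k = j.succ
    · exact absurd (h1 ▸ h2) (hcs j)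
    · simp [h1, h2, hcs j]
    · simp [h1, h2, (hcs j).symm]
    · simp [h1, h2]
  have hS : (fun j : Fin p => (if k = j.succ then PZ else 1) ^ (z ((j : ℕ) + 1)).val)
      = fun j : Fin p => PZ ^ (if k = j.succ then (z ((j : ℕ) + 1)).val else 0) := by
    funext j; by_cases h : k = j.succ <;> simp [h]
  rw [hV, hS, prod_ofFn_pow, prod_ofFn_pow]
  simp only [Fin.ext_iff, Fin.coe_castSucc, Fin.val_succ, Fin.val_zero]
  rw [Finset.sum_add_distrib, sum_ite_val, sum_ite_val', sum_ite_val']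
  by_cases hk0 : (k : ℕ) = 0
  · rw [dif_pos (show (k : ℕ) < p by omega),
      dif_neg (by omega), dif_neg (by omega), if_pos hk0, if_pos hk0, hk0]
    simp
  · rw [dif_pos (show (k : ℕ) - 1 < p ∧ 1 ≤ (k : ℕ) by have := k.isLt; omega),
      dif_pos (show (k : ℕ) - 1 < p ∧ 1 ≤ (k : ℕ) by have := k.isLt; omega),
      if_neg hk0, if_neg hk0, one_pow,
      show (k : ℕ) - 1 + 1 = (k : ℕ) by omega]
    rw [mul_assoc, ← mul_assoc (PZ ^ (z (k : ℕ)).val), ← pow_add,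
      pow_sq_one PZ_sq, show ((z (k:ℕ)).val + (z (k:ℕ)).val) % 2 = 0 by omega,
      pow_zero, one_mul, ← pow_add]
    set A := (if h : (k : ℕ) < p then (x ((k : ℕ) + 1)).val else 0) + (x (k : ℕ)).val with hA
    refine Eq.trans (PX_pow_eq (m := A + (x (k:ℕ) + x ((k:ℕ) + 1)).val) (n := 0) ?_) (pow_zero _)
    have hvx : ∀ a b : ZMod 2, (a + b).val = (a.val + b.val) % 2 := fun a b => ZMod.val_add a b
    have h2 : (x ((k:ℕ) + 1)).val < 2 := ZMod.val_lt _
    have h3 : (x (k:ℕ)).val < 2 := ZMod.val_lt _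
    rw [hA, hvx]
    by_cases hkp : (k : ℕ) < p
    · rw [dif_pos hkp]; omega
    · have hkp' : (k : ℕ) = p := by have := k.isLt; omega
      have : x ((k : ℕ) + 1) = 0 := by rw [hkp', hx]
      rw [dif_neg hkp, this]
      simp
      omega
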